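/- For every n ≥ 3 and every k with 2 ≤ k < n, there exists a completely reachable DFA B with n states such that Γ(B) = Γ_k(B) is strongly connected while Γ_j(B) is not strongly connected for all j < k; that is, the iterative construction of Γ(B) terminates with SUCCESS after exactly k steps. (The family E_{n,k} witnesses this.) -/

import Mathlib

/-!
Framework: complete deterministic finite automata, reachability of subsets,
defect/excluded/duplicate states of words, and the layered graphs
`Γ₁(A), Γ₂(A), …` of Bondar & Volkov, "A Characterization of Completely
Reachable Automata".
-/

/-- The action of a word on a state: `q · w`. -/
def actWord {Q σ : Type*} (δ : Q → σ → Q) (w : List σ) (q : Q) : Q :=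
  w.foldl δ q

/-- The image of a set of states under a word: `P · w`. -/
def actSet {Q σ : Type*} (δ : Q → σ → Q) (w : List σ) (P : Set Q) : Set Q :=
  actWord δ w '' P

/-- The set `excl(w) = Q \ Q·w` of excluded states of the word `w`. -/
def excl {Q σ : Type*} (δ : Q → σ → Q) (w : List σ) : Set Q :=
  Set.univ \ actSet δ w Set.univ

/-- The defect of the word `w`, i.e. `|Q \ Q·w|`. -/
noncomputable def defect {Q σ : Type*} (δ : Q → σ → Q) (w : List σ) : ℕ :=
  (excl δ w).ncard

/-- The set `dupl(w)` of duplicate states of the word `w`. -/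
def dupl {Q σ : Type*} (δ : Q → σ → Q) (w : List σ) : Set Q :=
  {p | ∃ q₁ q₂ : Q, q₁ ≠ q₂ ∧ actWord δ w q₁ = p ∧ actWord δ w q₂ = p}

/-- A subset `P ⊆ Q` is reachable if `P = Q·w` for some word `w`. -/
def reachableSubset {Q σ : Type*} (δ : Q → σ → Q) (P : Set Q) : Prop :=
  ∃ w : List σ, actSet δ w Set.univ = P

/-- A DFA is completely reachable if every nonempty subset of states is reachable. -/
def completelyReachable {Q σ : Type*} (δ : Q → σ → Q) : Prop :=
  ∀ P : Set Q, P.Nonempty → reachableSubset δ P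

/-- A directed graph given by a vertex set and an edge relation. -/
structure DGraph (V : Type*) where
  verts : Set V
  edge : V → V → Prop

/-- Reachability by a directed path in a graph. -/
def GReach {V : Type*} (G : DGraph V) : V → V → Prop :=
  Relation.ReflTransGen G.edge

/-- A graph is strongly connected if each of its vertices is reachable from
any other one. -/
def StronglyConnected {V : Type*} (G : DGraph V) : Prop :=
  ∀ u ∈ G.verts, ∀ v ∈ G.verts, GReach G u v

/-- The strongly connected component of the vertex `v`: all vertices mutually
reachable with `v`. -/
def scc {V : Type*} (G : DGraph V) (v : V) : Set V :=
  {u | u ∈ G.verts ∧ GReach G u v ∧ GReach G v u}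

/-- Vertices of the layered graphs: states (`Sum.inl`) and subsets of states
(`Sum.inr`). -/
abbrev Vtx (Q : Type*) := Q ⊕ Set Q

/-- The support of a set of vertices: the states belonging to it. -/
def support {Q : Type*} (S : Set (Vtx Q)) : Set Q :=
  {q | Sum.inl q ∈ S}

/-- The graph `Γ₁(A)`: vertices are the states, and there is an edge
`(excl w, dupl w)` for each word `w` of defect 1. -/
def Gamma1 {Q σ : Type*} (δ : Q → σ → Q) : DGraph (Vtx Q) where
  verts := Set.range Sum.inl
  edge := fun u v => ∃ q p : Q, u = Sum.inl q ∧ v = Sum.inl p ∧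
    ∃ w : List σ, defect δ w = 1 ∧ excl δ w = {q} ∧ p ∈ dupl δ w

/-- `Qnext G k`: the collection of the supports of all SCCs of `G` of rank
at least `k` (this is the set `Q_k` when `G = Γ_{k-1}(A)`). -/
def Qnext {Q : Type*} (G : DGraph (Vtx Q)) (k : ℕ) : Set (Set Q) :=
  {C | ∃ v ∈ G.verts, C = support (scc G v) ∧ k ≤ C.ncard}

/-- One step of the iterative construction: from `G = Γ_{k-1}(A)` build
`Γ_k(A)` by adding the new vertices `Q_k`, the inclusion edges `I_k`, and the
edges `E_k` enforced by words of defect `k`. -/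
def step {Q σ : Type*} (δ : Q → σ → Q) (G : DGraph (Vtx Q)) (k : ℕ) :
    DGraph (Vtx Q) where
  verts := G.verts ∪ Sum.inr '' Qnext G k
  edge := fun u v =>
    G.edge u v ∨
    (∃ C ∈ Qnext G k, v = Sum.inr C ∧
      ((∃ q : Q, u = Sum.inl q ∧ q ∈ C) ∨
       (∃ D : Set Q, u = Sum.inr D ∧ Sum.inr D ∈ G.verts ∧ D ⊂ C))) ∨
    (∃ C ∈ Qnext G k, ∃ p : Q, u = Sum.inr C ∧ v = Sum.inl p ∧
      ∃ w : List σ, defect δ w = k ∧ excl δ w ⊆ C ∧ p ∈ dupl δ w)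

/-- The layered graphs `Γ_k(A)` (with `Γ_0 := Γ_1`). -/
def Gamma {Q σ : Type*} (δ : Q → σ → Q) : ℕ → DGraph (Vtx Q)
  | 0 => Gamma1 δ
  | 1 => Gamma1 δ
  | (k + 2) => step δ (Gamma δ (k + 1)) (k + 2)

/-- The FAILURE condition at step `k`: every SCC of `Γ_k(A)` has rank at
most `k`. -/
def failsAt {Q σ : Type*} (δ : Q → σ → Q) (k : ℕ) : Prop :=
  ∀ v ∈ (Gamma δ k).verts, (support (scc (Gamma δ k) v)).ncard ≤ k

/-- The iterative construction stops at step `k` (so `Γ(A) = Γ_k(A)`):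
`k` is the first index at which `Γ_k(A)` is strongly connected (SUCCESS) or
every SCC of `Γ_k(A)` has rank at most `k` (FAILURE). -/
def stopsAt {Q σ : Type*} (δ : Q → σ → Q) (k : ℕ) : Prop :=
  1 ≤ k ∧ (StronglyConnected (Gamma δ k) ∨ failsAt δ k) ∧
    ∀ j, 1 ≤ j → j < k → ¬ StronglyConnected (Gamma δ j) ∧ ¬ failsAt δ j

namespace CRAux

open scoped Classical

/-- Admissible transformations: either no state other than `0` maps to `0`,
or the defect is at least `k`. -/
def Adm (n k : ℕ) (f : Fin n → Fin n) : Prop :=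
  (∀ q, (f q).val = 0 → q.val = 0) ∨ k ≤ (Set.univ \ Set.range f).ncard

/-- The alphabet: all admissible transformations. -/
def Sig (n k : ℕ) : Type := {f : Fin n → Fin n // Adm n k f}

noncomputable instance (n k : ℕ) : Fintype (Sig n k) := by
  unfold Sig; exact Fintype.ofFinite _

/-- The transition function. -/
def del (n k : ℕ) : Fin n → Sig n k → Fin n := fun q f => f.1 q

variable {n k : ℕ}

lemma actWord_nil (q : Fin n) : actWord (del n k) [] q = q := rfl

lemma actWord_cons (f : Sig n k) (w : List (Sig n k)) (q : Fin n) :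
    actWord (del n k) (f :: w) q = actWord (del n k) w (f.1 q) := rfl

lemma actWord_singleton (f : Sig n k) (q : Fin n) :
    actWord (del n k) [f] q = f.1 q := rfl

lemma actSet_univ (w : List (Sig n k)) :
    actSet (del n k) w Set.univ = Set.range (actWord (del n k) w) := by
  unfold actSet; exact Set.image_univ

lemma excl_eq (w : List (Sig n k)) :
    excl (del n k) w = Set.univ \ Set.range (actWord (del n k) w) := by
  unfold excl; rw [actSet_univ]

lemma ncard_compl_le {f g : Fin n → Fin n} (h : Set.range f ⊆ Set.range g) :
    (Set.univ \ Set.range g).ncard ≤ (Set.univ \ Set.range f).ncard :=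
  Set.ncard_le_ncard (fun x hx => ⟨hx.1, fun hf => hx.2 (h hf)⟩) (Set.toFinite _)

lemma ncard_compl_card {f : Fin n → Fin n} :
    (Set.univ \ Set.range f).ncard = n - (Set.range f).ncard := by
  rw [Set.ncard_diff (Set.subset_univ _) (Set.toFinite _)]
  simp [Set.ncard_univ]

lemma adm_actWord (w : List (Sig n k)) : Adm n k (actWord (del n k) w) := by
  induction w with
  | nil => exact Or.inl (fun q h => h)
  | cons f t ih =>
    have hcomp : actWord (del n k) (f :: t) = (actWord (del n k) t) ∘ f.1 := rfl
    rcases f.2 with hf | hf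
    · rcases ih with ht | ht
      · exact Or.inl (fun q h => hf q (ht (f.1 q) h))
      · refine Or.inr ?_
        have hsub : Set.range (actWord (del n k) (f :: t)) ⊆
            Set.range (actWord (del n k) t) := by
          rw [hcomp]; exact Set.range_comp_subset_range _ _
        exact le_trans ht (ncard_compl_le hsub)
    · refine Or.inr ?_
      have h1 : Set.range (actWord (del n k) (f :: t)) =
          actWord (del n k) t '' Set.range f.1 := by
        rw [hcomp]; exact Set.range_comp _ _
      have h2 : (Set.range (actWord (del n k) (f :: t))).ncard ≤
          (Set.range f.1).ncard := by
        rw [h1]; exact Set.ncard_image_le (Set.toFinite _)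
      have h3 := ncard_compl_card (f := f.1)
      have h4 := ncard_compl_card (f := actWord (del n k) (f :: t))
      have h5 : (Set.range f.1).ncard ≤ n :=
        le_trans (Set.ncard_le_ncard (Set.subset_univ _) (Set.toFinite _))
          (by simp [Set.ncard_univ])
      omega

lemma dupl_val_ne_zero {w : List (Sig n k)} (hw : defect (del n k) w < k)
    {p : Fin n} (hp : p ∈ dupl (del n k) w) : p.val ≠ 0 := by
  rcases adm_actWord (n := n) (k := k) w with h | h
  · rintro h0
    obtain ⟨q₁, q₂, hne, e₁, e₂⟩ := hp
    have h₁ : q₁.val = 0 := h q₁ (by rw [e₁]; exact h0)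
    have h₂ : q₂.val = 0 := h q₂ (by rw [e₂]; exact h0)
    exact hne (Fin.ext (h₁.trans h₂.symm))
  · have : defect (del n k) w = (Set.univ \ Set.range (actWord (del n k) w)).ncard := by
      unfold defect; rw [excl_eq]
    omega

/-! ### The merge letters -/

/-- The transformation sending `q` to `p` and fixing everything else. -/
def mergeF (n : ℕ) (q p : Fin n) : Fin n → Fin n := fun x => if x = q then p else x

lemma mergeF_adm {q p : Fin n} (hp : p.val ≠ 0) : Adm n k (mergeF n q p) := by
  refine Or.inl (fun x hx => ?_)
  unfold mergeF at hx
  by_cases hxq : x = q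
  · rw [if_pos hxq] at hx; exact absurd hx hp
  · rwa [if_neg hxq] at hx

lemma range_mergeF {q p : Fin n} (hpq : p ≠ q) :
    Set.range (mergeF n q p) = Set.univ \ {q} := by
  ext x
  constructor
  · rintro ⟨y, rfl⟩
    refine ⟨trivial, ?_⟩
    unfold mergeF
    by_cases hyq : y = q
    · rw [if_pos hyq]; exact hpq
    · rwa [if_neg hyq]
  · rintro ⟨-, hx⟩
    simp only [Set.mem_singleton_iff] at hx
    exact ⟨x, by unfold mergeF; rw [if_neg hx]⟩

lemma excl_mergeF {q p : Fin n} (hp : p.val ≠ 0) (hpq : p ≠ q) :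
    excl (del n k) [⟨mergeF n q p, mergeF_adm hp⟩] = {q} := by
  rw [excl_eq]
  have : Set.range (actWord (del n k) [⟨mergeF n q p, mergeF_adm hp⟩]) =
      Set.range (mergeF n q p) := rfl
  rw [this, range_mergeF hpq]
  ext x
  simp [em]

lemma gamma1_edge (hk2 : 2 ≤ k) {q p : Fin n} (hp : p.val ≠ 0) (hpq : p ≠ q) :
    (Gamma1 (del n k)).edge (Sum.inl q) (Sum.inl p) := by
  refine ⟨q, p, rfl, rfl, [⟨mergeF n q p, mergeF_adm hp⟩], ?_, excl_mergeF hp hpq, ?_⟩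
  · unfold defect
    rw [excl_mergeF hp hpq]
    exact Set.ncard_singleton q
  · refine ⟨q, p, fun h => hpq h.symm, ?_, ?_⟩
    · show mergeF n q p q = p
      unfold mergeF; rw [if_pos rfl]
    · show mergeF n q p p = p
      unfold mergeF; rw [if_neg hpq]

/-! ### The big-collapse letter `c` -/

/-- The transformation collapsing `{0, 1, …, k}` to `0`. -/
def cF (n k : ℕ) : Fin n → Fin n :=
  fun x => if x.val ≤ k then ⟨0, Nat.lt_of_le_of_lt (Nat.zero_le _) x.isLt⟩ else x

lemma range_cF (hk2 : 2 ≤ k) :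
    Set.range (cF n k) = {x : Fin n | x.val = 0 ∨ k < x.val} := by
  ext x
  constructor
  · rintro ⟨y, rfl⟩
    unfold cF
    by_cases hy : y.val ≤ k
    · rw [if_pos hy]; exact Or.inl rfl
    · rw [if_neg hy]; exact Or.inr (by omega)
  · rintro (hx | hx)
    · refine ⟨x, ?_⟩
      unfold cF
      rw [if_pos (by omega)]
      exact Fin.ext hx.symm
    · exact ⟨x, by unfold cF; rw [if_neg (by omega)]⟩

lemma excl_cF_eq (hk2 : 2 ≤ k) {h : Adm n k (cF n k)} :
    excl (del n k) [⟨cF n k, h⟩] = {x : Fin n | x.val ≠ 0 ∧ x.val ≤ k} := by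
  rw [excl_eq]
  have : Set.range (actWord (del n k) [(⟨cF n k, h⟩ : Sig n k)]) =
      Set.range (cF n k) := rfl
  rw [this, range_cF hk2]
  ext x
  simp only [Set.mem_diff, Set.mem_univ, Set.mem_setOf_eq, true_and]
  omega

lemma ncard_band (hkn : k < n) :
    ({x : Fin n | x.val ≠ 0 ∧ x.val ≤ k}).ncard = k := by
  have himg : {x : Fin n | x.val ≠ 0 ∧ x.val ≤ k} =
      (fun i : Fin k => (⟨i.val + 1, by omega⟩ : Fin n)) '' Set.univ := by
    ext x
    constructor
    · rintro ⟨hx0, hxk⟩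
      exact ⟨⟨x.val - 1, by omega⟩, trivial, Fin.ext (by simp; omega)⟩
    · rintro ⟨i, -, rfl⟩
      exact ⟨by simp, Nat.succ_le_of_lt i.isLt⟩
  rw [himg, Set.ncard_image_of_injective _ (fun i j hij => by
    have := Fin.val_eq_of_eq hij
    exact Fin.ext (by simpa using this))]
  simp [Set.ncard_univ]

lemma cF_adm (hk2 : 2 ≤ k) (hkn : k < n) : Adm n k (cF n k) := by
  refine Or.inr ?_
  have : Set.univ \ Set.range (cF n k) = {x : Fin n | x.val ≠ 0 ∧ x.val ≤ k} := by
    rw [range_cF hk2]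
    ext x
    simp only [Set.mem_diff, Set.mem_univ, Set.mem_setOf_eq, true_and]
    omega
  rw [this, ncard_band hkn]

lemma defect_cF (hk2 : 2 ≤ k) (hkn : k < n) :
    defect (del n k) [⟨cF n k, cF_adm hk2 hkn⟩] = k := by
  unfold defect
  rw [excl_cF_eq hk2, ncard_band hkn]

lemma zero_mem_dupl_cF (hk2 : 2 ≤ k) (hkn : k < n) (hn : 3 ≤ n) :
    (⟨0, by omega⟩ : Fin n) ∈ dupl (del n k) [⟨cF n k, cF_adm hk2 hkn⟩] := by
  refine ⟨⟨0, by omega⟩, ⟨1, by omega⟩, ?_, ?_, ?_⟩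
  · intro h
    exact absurd (Fin.val_eq_of_eq h) (by simp)
  · show cF n k ⟨0, by omega⟩ = _
    unfold cF
    rw [if_pos (show (0:ℕ) ≤ k by omega)]
  · show cF n k ⟨1, _⟩ = _
    unfold cF
    rw [if_pos (show (1:ℕ) ≤ k by omega)]

/-! ### The graph layer -/

/-- The set `S` of nonzero states. -/
def SS (n : ℕ) : Set (Fin n) := {x | x.val ≠ 0}

lemma ncard_SS (hn : 3 ≤ n) : (SS n).ncard = n - 1 := by
  have : SS n = Set.univ \ {(⟨0, by omega⟩ : Fin n)} := by
    ext x
    simp only [SS, Set.mem_setOf_eq, Set.mem_diff, Set.mem_univ, true_and,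
      Set.mem_singleton_iff]
    rw [Fin.ext_iff]
  rw [this, Set.ncard_diff (Set.subset_univ _) (Set.toFinite _)]
  simp [Set.ncard_univ]

/-- The structural invariant maintained by `Γ_j` for `j < k`. -/
def Good (n k : ℕ) (G : DGraph (Vtx (Fin n))) : Prop :=
  (∀ q : Fin n, Sum.inl q ∈ G.verts) ∧
  (∀ C : Set (Fin n), Sum.inr C ∈ G.verts → C = SS n) ∧
  (∀ u (p : Fin n), G.edge u (Sum.inl p) → p.val ≠ 0) ∧
  (∀ q p : Fin n, p.val ≠ 0 → p ≠ q → G.edge (Sum.inl q) (Sum.inl p))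

lemma reach_to_zero_aux {G : DGraph (Vtx (Fin n))}
    (h3 : ∀ u (p : Fin n), G.edge u (Sum.inl p) → p.val ≠ 0)
    {u v : Vtx (Fin n)} (h : GReach G u v) :
    ∀ p : Fin n, v = Sum.inl p → p.val = 0 → u = v := by
  induction h with
  | refl => intro _ _ _; rfl
  | tail _ he _ => rintro p rfl hp; exact absurd hp (h3 _ _ he)

lemma reach_to_zero {G : DGraph (Vtx (Fin n))}
    (h3 : ∀ u (p : Fin n), G.edge u (Sum.inl p) → p.val ≠ 0)
    {u : Vtx (Fin n)} {p : Fin n} (h : GReach G u (Sum.inl p)) (hp : p.val = 0) :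
    u = Sum.inl p :=
  reach_to_zero_aux h3 h p rfl hp

lemma support_scc_nonzero {G : DGraph (Vtx (Fin n))} (hG : Good n k G)
    {x : Fin n} (hx : x.val ≠ 0) :
    support (scc G (Sum.inl x)) = SS n := by
  ext y
  constructor
  · rintro ⟨-, -, r2⟩
    intro hy0
    have := reach_to_zero hG.2.2.1 r2 hy0
    rw [Sum.inl.injEq] at this
    exact hx (this ▸ hy0)
  · intro hy
    refine ⟨hG.1 y, ?_, ?_⟩
    · by_cases hyx : y = x
      · rw [hyx]; exact Relation.ReflTransGen.refl
      · exact Relation.ReflTransGen.single (hG.2.2.2 y x hx (fun h => hyx h.symm))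
    · by_cases hyx : x = y
      · rw [hyx]; exact Relation.ReflTransGen.refl
      · exact Relation.ReflTransGen.single (hG.2.2.2 x y hy (fun h => hyx h.symm))

lemma Qnext_good {G : DGraph (Vtx (Fin n))} (hG : Good n k G) (hn : 3 ≤ n)
    {j : ℕ} (h2 : 2 ≤ j) (hjn : j ≤ n - 1) :
    Qnext G j = {SS n} := by
  ext C
  constructor
  · rintro ⟨v, hv, rfl, hcard⟩
    have hne : (support (scc G v)).Nonempty := by
      rw [Set.nonempty_iff_ne_empty]
      intro hemp
      rw [hemp] at hcard
      simp at hcard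
      omega
    obtain ⟨x, hx⟩ := hne
    -- first find a nonzero element of the support
    have hxz : x.val ≠ 0 := by
      intro hx0
      obtain ⟨-, -, rx2⟩ := hx
      have hvx : v = Sum.inl x := reach_to_zero hG.2.2.1 rx2 hx0
      have hsub : support (scc G v) ⊆ {x} := by
        rintro y ⟨-, ry1, -⟩
        rw [hvx] at ry1
        have := reach_to_zero hG.2.2.1 ry1 hx0
        rw [Sum.inl.injEq] at this
        exact this
      have := Set.ncard_le_ncard hsub (Set.toFinite _)
      rw [Set.ncard_singleton] at this
      omega
    obtain ⟨hxv, rx1, rx2⟩ := hx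
    rw [Set.mem_singleton_iff]
    ext y
    constructor
    · rintro ⟨-, -, ry2⟩
      intro hy0
      have := reach_to_zero hG.2.2.1 (Relation.ReflTransGen.trans rx1 ry2) hy0
      rw [Sum.inl.injEq] at this
      exact hxz (this ▸ hy0)
    · intro hy
      refine ⟨hG.1 y, Relation.ReflTransGen.trans ?_ rx1,
        Relation.ReflTransGen.trans rx2 ?_⟩
      · by_cases hyx : y = x
        · rw [hyx]
        · exact Relation.ReflTransGen.single (hG.2.2.2 y x hxz (fun h => hyx h.symm))
      · by_cases hyx : x = y
        · rw [hyx]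
        · exact Relation.ReflTransGen.single (hG.2.2.2 x y hy (fun h => hyx h.symm))
  · rintro rfl
    refine ⟨Sum.inl ⟨1, by omega⟩, hG.1 _, (support_scc_nonzero hG (by simp)).symm, ?_⟩
    rw [ncard_SS hn]
    omega

/-! ### The iteration -/

lemma gamma_succ (m : ℕ) (hm : 1 ≤ m) :
    Gamma (del n k) (m + 1) = step (del n k) (Gamma (del n k) m) (m + 1) := by
  cases m with
  | zero => omega
  | succ i => rfl

lemma good_gamma1 (hk2 : 2 ≤ k) : Good n k (Gamma (del n k) 1) := by
  show Good n k (Gamma1 (del n k))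
  refine ⟨fun q => ⟨q, rfl⟩, ?_, ?_, ?_⟩
  · rintro C ⟨q, hq⟩
    simp at hq
  · rintro u p ⟨q', p', hu, hv, w, hd, he, hdup⟩
    rw [Sum.inl.injEq] at hv
    subst hv
    exact dupl_val_ne_zero (by omega) hdup
  · intro q p h1 h2
    exact gamma1_edge hk2 h1 h2

lemma good_step {G : DGraph (Vtx (Fin n))} (hG : Good n k G) (hn : 3 ≤ n)
    {j : ℕ} (h2 : 2 ≤ j) (hjk : j < k) (hjn : j ≤ n - 1) :
    Good n k (step (del n k) G j) := by
  refine ⟨fun q => Or.inl (hG.1 q), ?_, ?_, ?_⟩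
  · rintro C (hC | ⟨C', hC', heq⟩)
    · exact hG.2.1 C hC
    · rw [Sum.inr.injEq] at heq
      subst heq
      rw [Qnext_good hG hn h2 hjn] at hC'
      exact hC'
  · rintro u p (h | ⟨C, hC, hv, -⟩ | ⟨C, hC, p', hu, hv, w, hd, hsub, hdup⟩)
    · exact hG.2.2.1 u p h
    · simp at hv
    · rw [Sum.inl.injEq] at hv
      subst hv
      exact dupl_val_ne_zero (by omega) hdup
  · intro q p h1 h2
    exact Or.inl (hG.2.2.2 q p h1 h2)

lemma good_gamma (hn : 3 ≤ n) (hk2 : 2 ≤ k) (hkn : k < n) :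
    ∀ j, 1 ≤ j → j < k → Good n k (Gamma (del n k) j) := by
  intro j
  induction j with
  | zero => omega
  | succ m ih =>
    intro h1 hj
    by_cases hm : m = 0
    · subst hm
      exact good_gamma1 hk2
    · rw [gamma_succ m (by omega)]
      exact good_step (ih (by omega) (by omega)) hn (by omega) hj (by omega)

lemma not_sc_gamma (hn : 3 ≤ n) (hk2 : 2 ≤ k) (hkn : k < n)
    {j : ℕ} (h1 : 1 ≤ j) (hj : j < k) :
    ¬ StronglyConnected (Gamma (del n k) j) := by
  intro hSC
  have hG := good_gamma hn hk2 hkn j h1 hj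
  have hr := hSC (Sum.inl (⟨1, by omega⟩ : Fin n)) (hG.1 _)
    (Sum.inl (⟨0, by omega⟩ : Fin n)) (hG.1 _)
  have := reach_to_zero hG.2.2.1 hr rfl
  simp [Fin.ext_iff] at this

lemma not_fails_gamma (hn : 3 ≤ n) (hk2 : 2 ≤ k) (hkn : k < n)
    {j : ℕ} (h1 : 1 ≤ j) (hj : j < k) :
    ¬ failsAt (del n k) j := by
  intro hF
  have hG := good_gamma hn hk2 hkn j h1 hj
  have hb := hF (Sum.inl (⟨1, by omega⟩ : Fin n)) (hG.1 _)
  rw [support_scc_nonzero hG (by simp), ncard_SS hn] at hb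
  omega

lemma sc_gamma_k (hn : 3 ≤ n) (hk2 : 2 ≤ k) (hkn : k < n) :
    StronglyConnected (Gamma (del n k) k) := by
  have hstep : Gamma (del n k) k = step (del n k) (Gamma (del n k) (k - 1)) k := by
    have h := gamma_succ (n := n) (k := k) (k - 1) (by omega)
    rw [show k - 1 + 1 = k by omega] at h
    exact h
  set G' := Gamma (del n k) (k - 1) with hG'def
  have hG' : Good n k G' := good_gamma hn hk2 hkn (k - 1) (by omega) (by omega)
  have hQ : Qnext G' k = {SS n} := Qnext_good hG' hn hk2 (by omega)
  set Gk := step (del n k) G' k with hGk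
  rw [hstep]
  have eQ : ∀ q p : Fin n, p.val ≠ 0 → p ≠ q → Gk.edge (Sum.inl q) (Sum.inl p) :=
    fun q p h1 h2 => Or.inl (hG'.2.2.2 q p h1 h2)
  have eSS : ∀ q : Fin n, q.val ≠ 0 → Gk.edge (Sum.inl q) (Sum.inr (SS n)) := by
    intro q hq
    exact Or.inr (Or.inl ⟨SS n, by rw [hQ]; rfl, rfl, Or.inl ⟨q, rfl, hq⟩⟩)
  have eC : Gk.edge (Sum.inr (SS n)) (Sum.inl (⟨0, by omega⟩ : Fin n)) := by
    refine Or.inr (Or.inr ⟨SS n, by rw [hQ]; rfl, ⟨0, by omega⟩, rfl, rfl,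
      [⟨cF n k, cF_adm hk2 hkn⟩], defect_cF hk2 hkn, ?_, zero_mem_dupl_cF hk2 hkn hn⟩)
    rw [excl_cF_eq hk2]
    exact fun x hx => hx.1
  have ezo : Gk.edge (Sum.inl (⟨0, by omega⟩ : Fin n)) (Sum.inl (⟨1, by omega⟩ : Fin n)) :=
    eQ _ _ (by simp) (by simp [Fin.ext_iff])
  have to_o : ∀ w ∈ Gk.verts, GReach Gk w (Sum.inl (⟨1, by omega⟩ : Fin n)) := by
    rintro w (hw | ⟨C, hC, rfl⟩)
    · match w with
      | Sum.inl q =>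
        by_cases hq : (⟨1, by omega⟩ : Fin n) = q
        · rw [hq]; exact Relation.ReflTransGen.refl
        · exact Relation.ReflTransGen.single (eQ q _ (by simp) hq)
      | Sum.inr C =>
        have hCS := hG'.2.1 C hw
        subst hCS
        exact Relation.ReflTransGen.head eC (Relation.ReflTransGen.single ezo)
    · rw [hQ] at hC
      rw [Set.mem_singleton_iff] at hC
      subst hC
      exact Relation.ReflTransGen.head eC (Relation.ReflTransGen.single ezo)
  have from_o : ∀ w ∈ Gk.verts, GReach Gk (Sum.inl (⟨1, by omega⟩ : Fin n)) w := by
    have go_inl : ∀ p : Fin n, GReach Gk (Sum.inl (⟨1, by omega⟩ : Fin n)) (Sum.inl p) := by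
      intro p
      by_cases hp : p = ⟨1, by omega⟩
      · rw [hp]; exact Relation.ReflTransGen.refl
      · by_cases hp0 : p.val = 0
        · have hpz : p = (⟨0, by omega⟩ : Fin n) := Fin.ext (by simpa using hp0)
          rw [hpz]
          exact Relation.ReflTransGen.head (eSS _ (by simp))
            (Relation.ReflTransGen.single eC)
        · exact Relation.ReflTransGen.single (eQ _ p hp0 hp)
    rintro w (hw | ⟨C, hC, rfl⟩)
    · match w with
      | Sum.inl p => exact go_inl p
      | Sum.inr C =>
        have hCS := hG'.2.1 C hw
        subst hCS
        exact Relation.ReflTransGen.single (eSS _ (by simp))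
    · rw [hQ] at hC
      rw [Set.mem_singleton_iff] at hC
      subst hC
      exact Relation.ReflTransGen.single (eSS _ (by simp))
  intro u hu v hv
  exact Relation.ReflTransGen.trans (to_o u hu) (from_o v hv)

lemma completely_reachable (hn : 3 ≤ n) (hkn : k < n) :
    completelyReachable (del n k) := by
  intro P hP
  by_cases h : ∃ p ∈ P, p.val ≠ 0
  · obtain ⟨p₀, hp₀P, hp₀⟩ := h
    have hadm : Adm n k (fun x => if x ∈ P then x else p₀) := by
      refine Or.inl (fun x hx => ?_)
      have hx' : ((if x ∈ P then x else p₀ : Fin n)).val = 0 := hx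
      by_cases hxP : x ∈ P
      · rwa [if_pos hxP] at hx'
      · rw [if_neg hxP] at hx'
        exact absurd hx' hp₀
    refine ⟨[⟨_, hadm⟩], ?_⟩
    rw [actSet_univ]
    have hr : Set.range (actWord (del n k) [(⟨_, hadm⟩ : Sig n k)]) =
        Set.range (fun x => if x ∈ P then x else p₀) := rfl
    rw [hr]
    ext y
    constructor
    · rintro ⟨x, rfl⟩
      show (if x ∈ P then x else p₀) ∈ P
      by_cases hxP : x ∈ P
      · rwa [if_pos hxP]
      · rwa [if_neg hxP]
    · intro hy
      exact ⟨y, by show (if y ∈ P then y else p₀) = y; rw [if_pos hy]⟩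
  · push_neg at h
    obtain ⟨z₀, hz₀⟩ := hP
    have hPz : P = {z₀} := by
      ext x
      constructor
      · intro hx
        exact Fin.ext ((h x hx).trans (h z₀ hz₀).symm)
      · rintro rfl
        exact hz₀
    have hne : Nonempty (Fin n) := ⟨⟨0, by omega⟩⟩
    have hadm : Adm n k (fun _ => z₀) := by
      refine Or.inr ?_
      rw [Set.range_const, Set.ncard_diff (Set.subset_univ _) (Set.toFinite _),
        Set.ncard_singleton]
      simp only [Set.ncard_univ, Nat.card_eq_fintype_card, Fintype.card_fin]
      omega
    refine ⟨[⟨_, hadm⟩], ?_⟩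
    rw [actSet_univ]
    have hr : Set.range (actWord (del n k) [(⟨_, hadm⟩ : Sig n k)]) =
        Set.range (fun _ : Fin n => z₀) := rfl
    rw [hr, Set.range_const, hPz]


end CRAux


/-- for all `n ≥ 3` and `2 ≤ k < n` there is a completely
reachable DFA `B` with `n` states such that the iterative construction of
`Γ(B)` terminates with SUCCESS after exactly `k` steps: `Γ(B) = Γ_k(B)` is
strongly connected while `Γ_j(B)` is not strongly connected for all `j < k`.
(The family `E_{n,k}` witnesses this.) -/
theorem exists_completely_reachable_success_at_k
    (n k : ℕ) (hn : 3 ≤ n) (hk2 : 2 ≤ k) (hkn : k < n) :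
    ∃ (σ : Type) (_ : Fintype σ) (δ : Fin n → σ → Fin n),
      completelyReachable δ ∧ stopsAt δ k ∧
      StronglyConnected (Gamma δ k) ∧
      ∀ j, 1 ≤ j → j < k → ¬ StronglyConnected (Gamma δ j) := by
  exact ⟨CRAux.Sig n k, inferInstance, CRAux.del n k,
    CRAux.completely_reachable hn hkn,
    ⟨by omega, Or.inl (CRAux.sc_gamma_k hn hk2 hkn),
      fun j hj1 hj2 => ⟨CRAux.not_sc_gamma hn hk2 hkn hj1 hj2,
        CRAux.not_fails_gamma hn hk2 hkn hj1 hj2⟩⟩,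
    CRAux.sc_gamma_k hn hk2 hkn,
    fun j hj1 hj2 => CRAux.not_sc_gamma hn hk2 hkn hj1 hj2⟩
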